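/- Let φ be a monotonic nonessential enhancement of site percolation on the triangular lattice and fix s ∈ [0,1]. Assume there is a continuous function F : (0,∞) → ℝ such that for all b,h > 0 the crossing probabilities of independent critical site percolation on the triangular lattice satisfy lim_{δ→0} φ_δ(b,h) = F(b/h) (by Smirnov's theorem this holds with F given by Cardy's formula). Then for all b,h > 0 the crossing probabilities of the enhanced process satisfy lim_{δ→0} φ̂_δ(b,h) = F(b/h); i.e., the crossing probabilities of the enhanced process converge in the scaling limit to Cardy's formula. -/

import Mathlib

open MeasureTheory Filter Set Topology
open scoped ENNReal

namespace PercEnh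

/-- Sites of the lattice (vertex set `ℤ²`). -/
abbrev Site : Type := ℤ × ℤ

/-- A configuration: the set of open sites. -/
abbrev Config : Type := Set Site

/-- Square-lattice (`ℤ²`-) adjacency: `‖x − y‖₁ = 1`. -/
def adjZ2 (x y : Site) : Prop := |x.1 - y.1| + |x.2 - y.2| = 1

/-- Matching (star) adjacency: `x ≠ y` and `‖x − y‖_∞ = 1`. -/
def adjStar (x y : Site) : Prop := x ≠ y ∧ max |x.1 - y.1| |x.2 - y.2| = 1

/-- Euclidean norm of a site. -/
noncomputable def siteNorm (x : Site) : ℝ := Real.sqrt ((x.1 : ℝ) ^ 2 + (x.2 : ℝ) ^ 2)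

/-- Sites in the closed Euclidean ball of radius `r` centred at the origin. -/
def siteBall (r : ℝ) : Set Site := {x | siteNorm x ≤ r}

/-- The shifted configuration `τ_x ω = {y − x : y ∈ ω}`. -/
def shiftConfig (x : Site) (ω : Config) : Config := {y | y + x ∈ ω}

/-- An enhancement function of (finite) range `R₀`: takes values in subsets of
`𝔹₀ = ℤ² ∩ B(R₀)` and depends only on the restriction of the configuration to `𝔹₀`. -/
def IsEnhancement (R₀ : ℝ) (φ : Config → Config) : Prop :=
  0 ≤ R₀ ∧ (∀ ω, φ ω ⊆ siteBall R₀) ∧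
    ∀ ω ω' : Config, ω ∩ siteBall R₀ = ω' ∩ siteBall R₀ → φ ω = φ ω'

/-- A monotonic enhancement function. -/
def Monotonic (φ : Config → Config) : Prop := ∀ ω ω' : Config, ω ⊆ ω' → φ ω ⊆ φ ω'

/-- The translate `φ_x(ω) = x + φ₀(τ_x ω)`. -/
def enhAt (φ : Config → Config) (x : Site) (ω : Config) : Config :=
  (fun z => z + x) '' φ (shiftConfig x ω)

/-- The enhanced configuration `ω̂(ω, α) = ω ∪ ⋃_{x : α(x)=1} φ_x(ω)`. -/
def enhanced (φ : Config → Config) (ω : Config) (α : Site → Bool) : Config :=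
  ω ∪ {y | ∃ x, α x = true ∧ y ∈ enhAt φ x ω}

/-- The fully (deterministically, with `s = 1`) enhanced configuration `ω̃`. -/
def fullyEnhanced (φ : Config → Config) (ω : Config) : Config :=
  ω ∪ {y | ∃ x, y ∈ enhAt φ x ω}

/-- `ω` contains a doubly-infinite self-repelling path (w.r.t. adjacency `adj`):
a two-sided sequence of distinct sites of `ω` in which exactly the consecutive
pairs are adjacent. -/
def HasDISRPath (adj : Site → Site → Prop) (ω : Config) : Prop :=
  ∃ γ : ℤ → Site, Function.Injective γ ∧ (∀ i, γ i ∈ ω) ∧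
    ∀ i j : ℤ, adj (γ i) (γ j) ↔ (j = i + 1 ∨ i = j + 1)

/-- The enhancement is essential: some configuration without a doubly-infinite
self-repelling path acquires one upon enhancement at the origin. -/
def Essential (adj : Site → Site → Prop) (φ : Config → Config) : Prop :=
  ∃ ω : Config, ¬ HasDISRPath adj ω ∧ HasDISRPath adj (ω ∪ φ ω)

/-- A (finite, nonempty) path w.r.t. adjacency `adj`: distinct sites,
consecutive ones adjacent. -/
def IsPathOn (adj : Site → Site → Prop) (l : List Site) : Prop :=
  l ≠ [] ∧ l.Nodup ∧ l.Chain' adj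

/-- `x` and `y` are joined by a path of sites of `ω`. -/
def ConnectedIn (adj : Site → Site → Prop) (ω : Config) (x y : Site) : Prop :=
  ∃ l : List Site, IsPathOn adj l ∧ (∀ z ∈ l, z ∈ ω) ∧
    l.head? = some x ∧ l.getLast? = some y

/-- `x` belongs to an infinite open cluster of `ω`. -/
def InInfiniteCluster (adj : Site → Site → Prop) (ω : Config) (x : Site) : Prop :=
  {y | ConnectedIn adj ω x y}.Infinite

/-- `ω` contains an infinite open cluster. -/
def HasInfiniteCluster (adj : Site → Site → Prop) (ω : Config) : Prop :=
  ∃ x, InInfiniteCluster adj ω x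

/-- The configuration corresponding to `η : Site → Bool`. -/
def toConfig (η : Site → Bool) : Config := {x | η x = true}

/-- A cylinder event. -/
def cylinder (F : Finset Site) (b : Site → Bool) : Set (Site → Bool) :=
  {η | ∀ x ∈ F, η x = b x}

/-- `μ` is the Bernoulli product measure with density `p` of open sites. -/
def IsBernoulli (p : ℝ) (μ : Measure (Site → Bool)) : Prop :=
  IsProbabilityMeasure μ ∧
    ∀ (F : Finset Site) (b : Site → Bool),
      μ (cylinder F b) = ∏ x ∈ F, ENNReal.ofReal (if b x then p else 1 - p)

/-- The percolation probability `θ`: the probability that the origin lies in an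
infinite open cluster. -/
noncomputable def theta (adj : Site → Site → Prop) (μ : Measure (Site → Bool)) : ℝ :=
  (μ {η | InInfiniteCluster adj (toConfig η) 0}).toReal

/-- The percolation probability of the enhanced process (`μ` the law of the
configuration, `ν` the law of the activation variables). -/
noncomputable def thetaEnh (adj : Site → Site → Prop) (φ : Config → Config)
    (μ ν : Measure (Site → Bool)) : ℝ :=
  ((μ.prod ν) {ηα | InInfiniteCluster adj (enhanced φ (toConfig ηα.1) ηα.2) 0}).toReal

/-- The critical point `p_c = sup {p ∈ [0,1] : θ(p) = 0}` for the family `P`. -/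
noncomputable def pcOf (adj : Site → Site → Prop) (P : ℝ → Measure (Site → Bool)) : ℝ :=
  sSup {p | p ∈ Icc (0:ℝ) 1 ∧ theta adj (P p) = 0}

/-- The connectivity function `τ_p(x)`. -/
noncomputable def tau (adj : Site → Site → Prop) (μ : Measure (Site → Bool)) (x : Site) : ℝ :=
  (μ {η | ConnectedIn adj (toConfig η) 0 x}).toReal

/-- The connectivity function `τ_{p,s}(x)` of the enhanced process. -/
noncomputable def tauEnh (adj : Site → Site → Prop) (φ : Config → Config)
    (μ ν : Measure (Site → Bool)) (x : Site) : ℝ :=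
  ((μ.prod ν) {ηα | ConnectedIn adj (enhanced φ (toConfig ηα.1) ηα.2) 0 x}).toReal

/-- The mean cluster size `χ(p) = E_p‖C‖ = ∑_x τ_p(x)`. -/
noncomputable def chi (adj : Site → Site → Prop) (μ : Measure (Site → Bool)) : ℝ≥0∞ :=
  ∑' x : Site, μ {η | ConnectedIn adj (toConfig η) 0 x}

/-- The mean cluster size of the enhanced process. -/
noncomputable def chiEnh (adj : Site → Site → Prop) (φ : Config → Config)
    (μ ν : Measure (Site → Bool)) : ℝ≥0∞ :=
  ∑' x : Site, (μ.prod ν) {ηα | ConnectedIn adj (enhanced φ (toConfig ηα.1) ηα.2) 0 x}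


/-- The open rectangle `R(b,h) = (−b/2, b/2) × (−h/2, h/2)`. -/
def rectR (b h : ℝ) : Set (ℝ × ℝ) :=
  {w | -(b / 2) < w.1 ∧ w.1 < b / 2 ∧ -(h / 2) < w.2 ∧ w.2 < h / 2}

/-- The top side `[−b/2, b/2] × {h/2}`. -/
def topSide (b h : ℝ) : Set (ℝ × ℝ) := {w | |w.1| ≤ b / 2 ∧ w.2 = h / 2}

/-- The bottom side `[−b/2, b/2] × {−h/2}`. -/
def botSide (b h : ℝ) : Set (ℝ × ℝ) := {w | |w.1| ≤ b / 2 ∧ w.2 = -(h / 2)}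

/-- The line segment from `u` to `v` in `ℝ²`. -/
def seg (u v : ℝ × ℝ) : Set (ℝ × ℝ) :=
  {w | ∃ t : ℝ, 0 ≤ t ∧ t ≤ 1 ∧ w = (1 - t) • u + t • v}

/-- There is an open vertical crossing of `R(b,h)` in the configuration `ω`, with the
lattice embedded in the plane via `emb`: an open path `x₀, x₁, …, x_m, x_{m+1}` with
the (embedded) intermediate sites in `R(b,h)`, the segment from `x₀` to `x₁` touching
the top side and the segment from `x_m` to `x_{m+1}` touching the bottom side. -/
def VertCrossing (adj : Site → Site → Prop) (emb : Site → ℝ × ℝ) (ω : Config)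
    (b h : ℝ) : Prop :=
  ∃ (n : ℕ) (x : ℕ → Site), 1 ≤ n ∧
    (∀ i ≤ n, adj (x i) (x (i + 1))) ∧
    (∀ i ≤ n + 1, ∀ j ≤ n + 1, x i = x j → i = j) ∧
    (∀ i ≤ n + 1, x i ∈ ω) ∧
    (∀ i, 1 ≤ i → i ≤ n → emb (x i) ∈ rectR b h) ∧
    (seg (emb (x 0)) (emb (x 1)) ∩ topSide b h).Nonempty ∧
    (seg (emb (x n)) (emb (x (n + 1))) ∩ botSide b h).Nonempty

/-- Crossing probability `φ_δ(b,h)` (with `emb` the mesh-`δ` embedding). -/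
noncomputable def crossProb (adj : Site → Site → Prop) (emb : Site → ℝ × ℝ)
    (μ : Measure (Site → Bool)) (b h : ℝ) : ℝ :=
  (μ {η | VertCrossing adj emb (toConfig η) b h}).toReal

/-- Crossing probability `φ̂_δ(b,h)` of the enhanced process. -/
noncomputable def crossProbEnh (adj : Site → Site → Prop) (φ : Config → Config)
    (emb : Site → ℝ × ℝ) (μ ν : Measure (Site → Bool)) (b h : ℝ) : ℝ :=
  ((μ.prod ν) {ηα | VertCrossing adj emb (enhanced φ (toConfig ηα.1) ηα.2) b h}).toReal

/-- Triangular-lattice adjacency, realized on the vertex set `ℤ²`: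
`x ~ y` iff `x − y ∈ {±(1,0), ±(0,1), ±(1,1)}`. -/
def adjT (x y : Site) : Prop :=
  x - y = (1, 0) ∨ x - y = (-1, 0) ∨ x - y = (0, 1) ∨ x - y = (0, -1) ∨
    x - y = (1, 1) ∨ x - y = (-1, -1)

/-- The standard embedding of the triangular lattice in `ℝ²` at mesh `δ`:
`(i,j) ↦ δ·(i + j/2, j·√3/2)`. -/
noncomputable def embedT (δ : ℝ) (x : Site) : ℝ × ℝ :=
  (δ * ((x.1 : ℝ) + (x.2 : ℝ) / 2), δ * ((x.2 : ℝ) * Real.sqrt 3 / 2))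



-- ## Auxiliary development

lemma adjT_iff' (x y : Site) : adjT x y ↔
    ((x.1 - y.1 = 1 ∧ x.2 - y.2 = 0) ∨ (x.1 - y.1 = -1 ∧ x.2 - y.2 = 0) ∨
     (x.1 - y.1 = 0 ∧ x.2 - y.2 = 1) ∨ (x.1 - y.1 = 0 ∧ x.2 - y.2 = -1) ∨
     (x.1 - y.1 = 1 ∧ x.2 - y.2 = 1) ∨ (x.1 - y.1 = -1 ∧ x.2 - y.2 = -1)) := by
  unfold adjT
  simp only [Prod.ext_iff, Prod.fst_sub, Prod.snd_sub]

lemma adjT_symm {x y : Site} (h : adjT x y) : adjT y x := by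
  rw [adjT_iff'] at h ⊢; omega

lemma adjT_irrefl (x : Site) : ¬ adjT x x := by
  rw [adjT_iff']; omega

lemma adjT_snd {x y : Site} (h : adjT x y) : |x.2 - y.2| ≤ 1 := by
  rw [adjT_iff'] at h; rw [abs_le]; omega

lemma adjT_offset (a : Site) (c d : ℤ) :
    adjT (a + (0, c)) (a + (0, d)) ↔ (c - d = 1 ∨ d - c = 1) := by
  rw [adjT_iff']
  simp only [Prod.fst_add, Prod.snd_add]
  omega


-- ### part B
lemma adjT_sub_add (a b x : Site) : adjT (a + x) (b + x) ↔ adjT a b := by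
  have e : (a + x) - (b + x) = a - b := by ring
  unfold adjT; rw [e]

lemma adjT_sub_sub (a b x : Site) : adjT (a - x) (b - x) ↔ adjT a b := by
  have e : (a - x) - (b - x) = a - b := by ring
  unfold adjT; rw [e]

lemma siteBall_coord {r : ℝ} {z : Site} (hz : z ∈ siteBall r) :
    |(z.1 : ℝ)| ≤ r ∧ |(z.2 : ℝ)| ≤ r := by
  have h : Real.sqrt ((z.1 : ℝ) ^ 2 + (z.2 : ℝ) ^ 2) ≤ r := hz
  constructor
  · calc |(z.1 : ℝ)| = Real.sqrt ((z.1:ℝ)^2) := by rw [Real.sqrt_sq_eq_abs]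
      _ ≤ Real.sqrt ((z.1 : ℝ) ^ 2 + (z.2 : ℝ) ^ 2) := by
          apply Real.sqrt_le_sqrt; nlinarith [sq_nonneg ((z.2:ℝ))]
      _ ≤ r := h
  · calc |(z.2 : ℝ)| = Real.sqrt ((z.2:ℝ)^2) := by rw [Real.sqrt_sq_eq_abs]
      _ ≤ Real.sqrt ((z.1 : ℝ) ^ 2 + (z.2 : ℝ) ^ 2) := by
          apply Real.sqrt_le_sqrt; nlinarith [sq_nonneg ((z.1:ℝ))]
      _ ≤ r := h

lemma siteBall_finite (r : ℝ) : (siteBall r).Finite := by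
  apply Set.Finite.subset (Set.finite_Icc ((-⌈r⌉, -⌈r⌉) : Site) ((⌈r⌉, ⌈r⌉) : Site))
  intro z hz
  obtain ⟨h1, h2⟩ := siteBall_coord hz
  have c1 : |(z.1 : ℝ)| ≤ (⌈r⌉ : ℝ) := h1.trans (Int.le_ceil r)
  have c2 : |(z.2 : ℝ)| ≤ (⌈r⌉ : ℝ) := h2.trans (Int.le_ceil r)
  rw [← Int.cast_abs, Int.cast_le] at c1 c2
  have d1 := abs_le.mp c1
  have d2 := abs_le.mp c2
  exact ⟨⟨d1.1, d2.1⟩, ⟨d1.2, d2.2⟩⟩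

lemma shiftConfig_mono {ω ω' : Config} (x : Site) (h : ω ⊆ ω') :
    shiftConfig x ω ⊆ shiftConfig x ω' := fun y hy => h hy

lemma shiftConfig_inter_image (x : Site) (ω : Config) (S : Set Site) :
    shiftConfig x (ω ∩ ((fun z => z + x) '' S)) = shiftConfig x ω ∩ S := by
  ext y
  simp only [shiftConfig, Set.mem_inter_iff, Set.mem_setOf_eq, Set.mem_image]
  constructor
  · rintro ⟨h1, s, hs, hsx⟩
    have : s = y := by
      have := congrArg (fun w => w - x) hsx; simpa using this
    exact ⟨h1, this ▸ hs⟩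
  · rintro ⟨h1, hy⟩
    exact ⟨h1, y, hy, rfl⟩

section Enh
variable {R₀ : ℝ} {φ : Config → Config}

lemma phi_local (hφ : IsEnhancement R₀ φ) (ω : Config) :
    φ ω = φ (ω ∩ siteBall R₀) := by
  apply hφ.2.2
  rw [Set.inter_assoc, Set.inter_self]

lemma enhAt_superset (hφ : IsEnhancement R₀ φ) (hmono : Monotonic φ)
    {ω ω' : Config} {x : Site}
    (h : ω ∩ ((fun z => z + x) '' siteBall R₀) ⊆ ω') :
    enhAt φ x ω ⊆ enhAt φ x ω' := by
  apply Set.image_mono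
  calc φ (shiftConfig x ω) = φ (shiftConfig x ω ∩ siteBall R₀) := phi_local hφ _
    _ = φ (shiftConfig x (ω ∩ ((fun z => z + x) '' siteBall R₀))) := by
        rw [shiftConfig_inter_image]
    _ ⊆ φ (shiftConfig x ω') := hmono _ _ (shiftConfig_mono x h)

lemma hasDISR_shift {Ω : Config} {x : Site} :
    HasDISRPath adjT (shiftConfig x Ω) ↔ HasDISRPath adjT Ω := by
  constructor
  · rintro ⟨γ, hinj, hmem, hex⟩
    refine ⟨fun i => γ i + x, fun i j hij => hinj (by simpa using hij), fun i => hmem i,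
      fun i j => ?_⟩
    rw [adjT_sub_add]; exact hex i j
  · rintro ⟨γ, hinj, hmem, hex⟩
    refine ⟨fun i => γ i - x, fun i j hij => hinj (by simpa [sub_left_inj] using hij),
      fun i => ?_, fun i j => ?_⟩
    · show (γ i - x) + x ∈ Ω; simpa using hmem i
    · rw [adjT_sub_sub]; exact hex i j

lemma has_of_hasEnh (hness : ¬ Essential adjT φ) (σ : Config)
    (h : HasDISRPath adjT (σ ∪ φ σ)) : HasDISRPath adjT σ := by
  by_contra hcon
  exact hness ⟨σ, hcon, h⟩

/-- Core rerouting step: removing the enhancement at a single centre `x`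
from a doubly-infinite self-repelling path still leaves a DISR path in the
configuration consisting of the true sites near `x` together with the other
path sites. -/
lemma reroute (hφ : IsEnhancement R₀ φ) (hmono : Monotonic φ)
    (hness : ¬ Essential adjT φ) (ω : Config) (x : Site)
    (γ : ℤ → Site) (hinj : Function.Injective γ)
    (hex : ∀ i j : ℤ, adjT (γ i) (γ j) ↔ (j = i + 1 ∨ i = j + 1)) :
    HasDISRPath adjT ((ω ∩ ((fun z => z + x) '' siteBall R₀)) ∪ (Set.range γ \ enhAt φ x ω)) := by
  classical
  set ball : Config := ω ∩ ((fun z => z + x) '' siteBall R₀) with hball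
  set Ω'' : Config := ball ∪ (Set.range γ \ enhAt φ x ω) with hΩ
  have hsub : enhAt φ x ω ⊆ enhAt φ x Ω'' := by
    apply enhAt_superset hφ hmono
    intro z hz
    exact Set.mem_union_left _ hz
  have hΓ : ∀ i, γ i ∈ Ω'' ∪ enhAt φ x Ω'' := by
    intro i
    by_cases hY : γ i ∈ enhAt φ x ω
    · exact Set.mem_union_right _ (hsub hY)
    · exact Set.mem_union_left _ (Set.mem_union_right _ ⟨Set.mem_range_self i, hY⟩)
  -- shift to the origin and apply non-essentiality
  have key : HasDISRPath adjT (shiftConfig x Ω'' ∪ φ (shiftConfig x Ω'')) := by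
    refine ⟨fun i => γ i - x, fun i j hij => hinj (by simpa [sub_left_inj] using hij),
      fun i => ?_, fun i j => ?_⟩
    · rcases hΓ i with h | h
      · left; show (γ i - x) + x ∈ Ω''; simpa using h
      · right
        rcases h with ⟨z, hz, hzx⟩
        have hzx' : z + x = γ i := hzx
        have hz2 : γ i - x = z := by rw [← hzx']; ring
        show γ i - x ∈ φ (shiftConfig x Ω'')
        rw [hz2]; exact hz
    · rw [adjT_sub_sub]; exact hex i j
  have := has_of_hasEnh hness _ key
  rw [hasDISR_shift] at this
  exact this

end Enh

/-- One-sided tail capture: the positive tail of an exact path `γ'` inside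
`S ∪ range γ` (with `S` finite and `γ` exact) eventually follows `γ` linearly. -/
lemma oneside (γ : ℤ → Site) (hinj : Function.Injective γ)
    (hex : ∀ i j : ℤ, adjT (γ i) (γ j) ↔ (j = i + 1 ∨ i = j + 1))
    (S : Set Site) (hS : S.Finite)
    (γ' : ℤ → Site) (hinj' : Function.Injective γ')
    (hex' : ∀ i j : ℤ, adjT (γ' i) (γ' j) ↔ (j = i + 1 ∨ i = j + 1))
    (hmem : ∀ t, γ' t ∈ S ∪ Set.range γ) :
    ∃ (T a s : ℤ), (s = 1 ∨ s = -1) ∧ 1 ≤ T ∧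
      ∀ t, T ≤ t → γ' t = γ (a + s * (t - T)) := by
  classical
  have hA : (γ' ⁻¹' S).Finite := hS.preimage hinj'.injOn
  obtain ⟨M, hM⟩ := hA.bddAbove
  set T : ℤ := max 1 (M + 1) with hT
  have hT1 : 1 ≤ T := le_max_left _ _
  have hnotS : ∀ t, T ≤ t → γ' t ∉ S := by
    intro t ht hts
    have := hM hts
    have : t ≤ M := this
    have : M + 1 ≤ t := le_trans (le_max_right 1 (M+1)) ht
    omega
  have hrange : ∀ t, T ≤ t → γ' t ∈ Set.range γ := by
    intro t ht
    rcases hmem t with h | h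
    · exact absurd h (hnotS t ht)
    · exact h
  set I : ℤ → ℤ := fun t => Function.invFun γ (γ' t) with hIdef
  have hI : ∀ t, T ≤ t → γ (I t) = γ' t := by
    intro t ht
    exact Function.invFun_eq (hrange t ht)
  have hstep : ∀ t, T ≤ t → I (t + 1) = I t + 1 ∨ I (t + 1) = I t - 1 := by
    intro t ht
    have adj : adjT (γ' t) (γ' (t + 1)) := (hex' t (t + 1)).mpr (Or.inl rfl)
    rw [← hI t ht, ← hI (t + 1) (by omega)] at adj
    rcases (hex _ _).mp adj with h | h
    · left; omega
    · right; omega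
  have Iinj : ∀ t₁ t₂, T ≤ t₁ → T ≤ t₂ → I t₁ = I t₂ → t₁ = t₂ := by
    intro t₁ t₂ h1 h2 he
    apply hinj'
    rw [← hI t₁ h1, ← hI t₂ h2, he]
  set s : ℤ := I (T + 1) - I T with hsdef
  have hs : s = 1 ∨ s = -1 := by
    rcases hstep T le_rfl with h | h <;> [left; right] <;> omega
  have claim : ∀ u : ℕ,
      I (T + (u : ℤ)) = I T + s * u ∧ I (T + u + 1) = I T + s * ((u : ℤ) + 1) := by
    intro u
    induction u with
    | zero =>
      constructor
      · norm_num
      · norm_num; omega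
    | succ u ih =>
      obtain ⟨ih1, ih2⟩ := ih
      have step2 := hstep (T + u + 1) (by omega)
      push_cast
      constructor
      · have harr : T + ((u : ℤ) + 1) = T + u + 1 := by ring
        rw [harr, ih2]
      · have harr : T + ((u : ℤ) + 1) + 1 = (T + u + 1) + 1 := by ring
        rw [harr]
        rcases step2 with h | h
        · rcases hs with hs1 | hs1
          · rw [h, ih2]; rw [hs1]; ring
          · exfalso
            have heq : I ((T + u + 1) + 1) = I (T + (u : ℤ)) := by
              rw [h, ih2, ih1]; rw [hs1]; ring
            have := Iinj _ _ (by omega) (by omega) heq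
            omega
        · rcases hs with hs1 | hs1
          · exfalso
            have heq : I ((T + u + 1) + 1) = I (T + (u : ℤ)) := by
              rw [h, ih2, ih1]; rw [hs1]; ring
            have := Iinj _ _ (by omega) (by omega) heq
            omega
          · rw [h, ih2]; rw [hs1]; ring
  refine ⟨T, I T, s, hs, hT1, ?_⟩
  intro t ht
  have hc := (claim (t - T).toNat).1
  have hcast : ((t - T).toNat : ℤ) = t - T := Int.toNat_of_nonneg (by omega)
  rw [hcast] at hc
  have harr : T + (t - T) = t := by ring
  rw [harr] at hc
  rw [← hI t ht, hc]

/-- Tail capture: a DISR path inside `S ∪ range γ` (with `S` finite and `γ` an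
exact path whose height tends to `±∞` at the two ends) itself has heights
tending to `±∞` at its two ends, after possibly reversing the orientation. -/
lemma tail_capture (γ : ℤ → Site) (hinj : Function.Injective γ)
    (hex : ∀ i j : ℤ, adjT (γ i) (γ j) ↔ (j = i + 1 ∨ i = j + 1))
    (ttop : Tendsto (fun i => (γ i).2) atBot atTop)
    (tbot : Tendsto (fun i => (γ i).2) atTop atBot)
    (S : Set Site) (hS : S.Finite)
    (γ' : ℤ → Site) (hinj' : Function.Injective γ')
    (hex' : ∀ i j : ℤ, adjT (γ' i) (γ' j) ↔ (j = i + 1 ∨ i = j + 1))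
    (hmem : ∀ t, γ' t ∈ S ∪ Set.range γ) :
    ∃ γ'' : ℤ → Site, Function.Injective γ'' ∧
      (∀ i j : ℤ, adjT (γ'' i) (γ'' j) ↔ (j = i + 1 ∨ i = j + 1)) ∧
      Set.range γ'' ⊆ Set.range γ' ∧
      Tendsto (fun i => (γ'' i).2) atBot atTop ∧
      Tendsto (fun i => (γ'' i).2) atTop atBot := by
  classical
  set ρ : ℤ → Site := fun t => γ' (-t) with hρ
  have hinjρ : Function.Injective ρ := by
    intro a b hab
    have := hinj' hab
    omega
  have hexρ : ∀ i j : ℤ, adjT (ρ i) (ρ j) ↔ (j = i + 1 ∨ i = j + 1) := by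
    intro i j
    rw [hex' (-i) (-j)]
    omega
  have hmemρ : ∀ t, ρ t ∈ S ∪ Set.range γ := fun t => hmem (-t)
  obtain ⟨T, a, s, hs, hT1, hlin⟩ := oneside γ hinj hex S hS γ' hinj' hex' hmem
  obtain ⟨T', a', s', hs', hT1', hlin'⟩ := oneside γ hinj hex S hS ρ hinjρ hexρ hmemρ
  -- rule out equal signs
  have hneq : ¬ (s = 1 ∧ s' = 1) := by
    rintro ⟨e, e'⟩
    set w := max a a' with hw
    have h1 : γ' (T + (w - a)) = γ w := by
      rw [hlin (T + (w - a)) (by omega)]; congr 1; rw [e]; ring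
    have h2 : ρ (T' + (w - a')) = γ w := by
      rw [hlin' (T' + (w - a')) (by omega)]; congr 1; rw [e']; ring
    have : γ' (T + (w - a)) = γ' (-(T' + (w - a'))) := by rw [h1, ← h2]
    have := hinj' this
    omega
  have hneq' : ¬ (s = -1 ∧ s' = -1) := by
    rintro ⟨e, e'⟩
    set w := min a a' with hw
    have h1 : γ' (T + (a - w)) = γ w := by
      rw [hlin (T + (a - w)) (by omega)]; congr 1; rw [e]; ring
    have h2 : ρ (T' + (a' - w)) = γ w := by
      rw [hlin' (T' + (a' - w)) (by omega)]; congr 1; rw [e']; ring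
    have : γ' (T + (a - w)) = γ' (-(T' + (a' - w))) := by rw [h1, ← h2]
    have := hinj' this
    omega
  -- helper tendstos
  have tendA : ∀ (c : ℤ), Tendsto (fun t : ℤ => (γ (t + c)).2) atTop atBot := by
    intro c
    exact tbot.comp (tendsto_atTop_add_const_right atTop c tendsto_id)
  have tendB : ∀ (c : ℤ), Tendsto (fun t : ℤ => (γ (t + c)).2) atBot atTop := by
    intro c
    exact ttop.comp (tendsto_atBot_add_const_right atBot c tendsto_id)
  rcases hs with e | e <;> rcases hs' with e' | e'
  · exact absurd ⟨e, e'⟩ hneq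
  · -- s = 1, s' = -1 : γ' itself works
    refine ⟨γ', hinj', hex', le_refl _, ?_, ?_⟩
    · -- atBot: use ρ-linearization
      apply (tendB (a' + T')).congr'
      filter_upwards [eventually_le_atBot (-T')] with t ht
      have h2 : γ' t = γ (a' + s' * ((-t) - T')) := by
        have h3 := hlin' (-t) (by omega)
        rw [hρ] at h3
        simpa using h3
      have hidx : a' + s' * ((-t) - T') = t + (a' + T') := by rw [e']; ring
      rw [hidx] at h2
      rw [h2]
    · apply (tendA (a - T)).congr'
      filter_upwards [eventually_ge_atTop T] with t ht
      have h2 : γ' t = γ (a + s * (t - T)) := hlin t ht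
      have hidx : a + s * (t - T) = t + (a - T) := by rw [e]; ring
      rw [hidx] at h2
      rw [h2]
  · -- s = -1, s' = 1 : reversed path works
    refine ⟨ρ, hinjρ, hexρ, ?_, ?_, ?_⟩
    · rintro z ⟨t, rfl⟩; exact ⟨-t, rfl⟩
    · -- atBot for ρ: ρ t = γ' (-t), -t ≥ T
      apply (tendB (a + T)).congr'
      filter_upwards [eventually_le_atBot (-T)] with t ht
      have h2 : ρ t = γ (a + s * ((-t) - T)) := hlin (-t) (by omega)
      have hidx : a + s * ((-t) - T) = t + (a + T) := by rw [e]; ring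
      rw [hidx] at h2
      rw [h2]
    · apply (tendA (a' - T')).congr'
      filter_upwards [eventually_ge_atTop T'] with t ht
      have h2 : ρ t = γ (a' + s' * (t - T')) := hlin' t ht
      have hidx : a' + s' * (t - T') = t + (a' - T') := by rw [e']; ring
      rw [hidx] at h2
      rw [h2]
  · exact absurd ⟨e, e'⟩ hneq'


/-- From any injective path one can extract a minimal, hence self-repelling
(exact), path with the same endpoints, using only sites of the original path. -/
lemma exact_subpath (x : ℕ → Site) (n : ℕ)
    (hadj : ∀ i ≤ n, adjT (x i) (x (i + 1)))
    (hinj : ∀ i ≤ n + 1, ∀ j ≤ n + 1, x i = x j → i = j) :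
    ∃ (m : ℕ) (q : ℕ → Site), q 0 = x 0 ∧ q m = x (n + 1) ∧
      (∀ i < m, adjT (q i) (q (i + 1))) ∧
      (∀ i ≤ m, ∀ j ≤ m, q i = q j → i = j) ∧
      (∀ i ≤ m, ∃ k ≤ n + 1, q i = x k) ∧
      (∀ i ≤ m, ∀ j ≤ m, adjT (q i) (q j) → (j = i + 1 ∨ i = j + 1)) := by
  classical
  set P : ℕ → Prop := fun m => ∃ q : ℕ → Site, q 0 = x 0 ∧ q m = x (n + 1) ∧
      (∀ i < m, adjT (q i) (q (i + 1))) ∧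
      (∀ i ≤ m, ∀ j ≤ m, q i = q j → i = j) ∧
      (∀ i ≤ m, ∃ k ≤ n + 1, q i = x k) with hP
  have hPn : P (n + 1) := by
    refine ⟨x, rfl, rfl, fun i hi => hadj i (by omega), fun i hi j hj hq => hinj i hi j hj hq,
      fun i hi => ⟨i, hi, rfl⟩⟩
  have hex : ∃ m, P m := ⟨n + 1, hPn⟩
  set m := Nat.find hex with hm
  obtain ⟨q, hq0, hqm, hqadj, hqinj, hqsites⟩ : P m := Nat.find_spec hex
  refine ⟨m, q, hq0, hqm, hqadj, hqinj, hqsites, ?_⟩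
  -- exactness by minimality
  have key : ∀ i j, i ≤ m → j ≤ m → i + 2 ≤ j → ¬ adjT (q i) (q j) := by
    intro i j hi hj hij hadj2
    set d : ℕ := j - i - 1 with hd
    have hd1 : 1 ≤ d := by omega
    set m' : ℕ := m - d with hm'
    have hm'lt : m' < m := by omega
    have hPm' : P m' := by
      set q' : ℕ → Site := fun k => if k ≤ i then q k else q (k + d) with hq'def
      have hle : ∀ k, k ≤ i → q' k = q k := fun k hk => if_pos hk
      have hgt : ∀ k, ¬ (k ≤ i) → q' k = q (k + d) := fun k hk => if_neg hk
      refine ⟨q', ?_, ?_, ?_, ?_, ?_⟩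
      · rw [hle 0 (by omega)]; exact hq0
      · rw [hgt m' (by omega)]
        have he : m' + d = m := by omega
        rw [he]; exact hqm
      · intro k hk
        by_cases h1 : k + 1 ≤ i
        · rw [hle k (by omega), hle (k + 1) h1]
          exact hqadj k (by omega)
        · by_cases h2 : k ≤ i
          · have hki : k = i := by omega
            rw [hle k h2, hgt (k + 1) h1, hki]
            have he : i + 1 + d = j := by omega
            rw [he]
            exact hadj2
          · rw [hgt k h2, hgt (k + 1) (by omega)]
            have he : k + 1 + d = k + d + 1 := by omega
            rw [he]
            exact hqadj (k + d) (by omega)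
      · intro k1 hk1 k2 hk2 heq
        by_cases h1 : k1 ≤ i <;> by_cases h2 : k2 ≤ i
        · rw [hle k1 h1, hle k2 h2] at heq
          exact hqinj k1 (by omega) k2 (by omega) heq
        · rw [hle k1 h1, hgt k2 h2] at heq
          have := hqinj k1 (by omega) (k2 + d) (by omega) heq; omega
        · rw [hgt k1 h1, hle k2 h2] at heq
          have := hqinj (k1 + d) (by omega) k2 (by omega) heq; omega
        · rw [hgt k1 h1, hgt k2 h2] at heq
          have := hqinj (k1 + d) (by omega) (k2 + d) (by omega) heq; omega
      · intro k hk
        by_cases h1 : k ≤ i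
        · rw [hle k h1]; exact hqsites k (by omega)
        · rw [hgt k h1]; exact hqsites (k + d) (by omega)
    exact absurd hPm' (Nat.find_min hex hm'lt)
  intro i hi j hj hadj1
  by_contra hcon
  push_neg at hcon
  have hne : i ≠ j := by
    intro he; rw [he] at hadj1; exact adjT_irrefl _ hadj1
  rcases Nat.lt_or_ge i j with hlt | hge
  · exact key i j hi hj (by omega) hadj1
  · have hadj' : adjT (q j) (q i) := by
      rw [adjT_iff'] at hadj1 ⊢; omega
    exact key j i hj hi (by omega) hadj'


-- ## Embedding helpers

lemma embedT_snd (δ : ℝ) (z : Site) :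
    (embedT δ z).2 = (δ * (Real.sqrt 3 / 2)) * (z.2 : ℝ) := by
  unfold embedT; ring

lemma embedT_fst (δ : ℝ) (z : Site) :
    (embedT δ z).1 = δ * ((z.1 : ℝ) + (z.2 : ℝ) / 2) := rfl

lemma embedT_add (δ : ℝ) (a u : Site) :
    embedT δ (a + u) = embedT δ a + embedT δ u := by
  unfold embedT
  simp only [Prod.fst_add, Prod.snd_add, Prod.ext_iff, Prod.mk_add_mk]
  push_cast
  constructor <;> ring

lemma adjT_emb2_le {δ : ℝ} (hδ : 0 ≤ δ) {x y : Site} (h : adjT x y) :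
    |(embedT δ x).2 - (embedT δ y).2| ≤ δ * (Real.sqrt 3 / 2) := by
  have hc : (0:ℝ) ≤ δ * (Real.sqrt 3 / 2) := by positivity
  have h2 := adjT_snd h
  have h2' : |((x.2 : ℝ)) - (y.2 : ℝ)| ≤ 1 := by
    have : ((|x.2 - y.2| : ℤ) : ℝ) ≤ 1 := by exact_mod_cast h2
    rw [Int.cast_abs] at this
    push_cast at this
    exact this
  rw [embedT_snd, embedT_snd, ← mul_sub, abs_mul, abs_of_nonneg hc]
  calc (δ * (Real.sqrt 3 / 2)) * |(x.2:ℝ) - (y.2:ℝ)| ≤ (δ * (Real.sqrt 3 / 2)) * 1 :=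
        mul_le_mul_of_nonneg_left h2' hc
    _ = δ * (Real.sqrt 3 / 2) := by ring

lemma emb1_ball_bound {δ R₀ : ℝ} (hδ : 0 ≤ δ) {u : Site} (hu : u ∈ siteBall R₀) :
    |(embedT δ u).1| ≤ δ * (3 / 2) * R₀ := by
  obtain ⟨h1, h2⟩ := siteBall_coord hu
  rw [embedT_fst, abs_mul, abs_of_nonneg hδ]
  have : |(u.1 : ℝ) + (u.2 : ℝ) / 2| ≤ (3/2) * R₀ := by
    calc |(u.1 : ℝ) + (u.2 : ℝ) / 2| ≤ |(u.1:ℝ)| + |(u.2:ℝ)/2| := abs_add_le _ _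
      _ = |(u.1:ℝ)| + |(u.2:ℝ)|/2 := by rw [abs_div]; norm_num
      _ ≤ R₀ + R₀/2 := by linarith
      _ = (3/2) * R₀ := by ring
  calc δ * |(u.1 : ℝ) + (u.2 : ℝ) / 2| ≤ δ * ((3/2) * R₀) :=
        mul_le_mul_of_nonneg_left this hδ
    _ = δ * (3/2) * R₀ := by ring

-- ## The invariant path structure

/-- A good bi-infinite exact path: its two ends escape vertically, every site in
the middle band is either truly open or one of finitely many removable
enhancement sites (located over the original crossing rectangle), and all
middle-band sites stay in a bounded horizontal strip. -/
structure GoodPath (R₀ : ℝ) (φ : Config → Config) (ω : Config) (δ b h : ℝ) where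
  γ : ℤ → Site
  inj : Function.Injective γ
  exact' : ∀ i j : ℤ, adjT (γ i) (γ j) ↔ (j = i + 1 ∨ i = j + 1)
  ttop : Tendsto (fun i => (γ i).2) atBot atTop
  tbot : Tendsto (fun i => (γ i).2) atTop atBot
  F : Finset Site
  hact : ∀ z ∈ F, ∃ x, z ∈ enhAt φ x ω
  hFx : ∀ z ∈ F, |(embedT δ z).1| ≤ b / 2
  hmid : ∀ i, |(embedT δ (γ i)).2| < h / 2 → γ i ∈ ω ∨ γ i ∈ F
  hstrip : ∀ i, |(embedT δ (γ i)).2| < h / 2 → |(embedT δ (γ i)).1| ≤ b / 2 + 3 * δ * R₀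

/-- One step: remove the enhancement centred at one removable site. -/
lemma good_step {R₀ : ℝ} {φ : Config → Config} {ω : Config} {δ b h : ℝ}
    (hφ : IsEnhancement R₀ φ) (hmono : Monotonic φ) (hness : ¬ Essential adjT φ)
    (hδ : 0 ≤ δ)
    (G : GoodPath R₀ φ ω δ b h) (hne : G.F.Nonempty) :
    ∃ G' : GoodPath R₀ φ ω δ b h, G'.F.card < G.F.card := by
  classical
  obtain ⟨z, hz⟩ := hne
  obtain ⟨xc, hxc⟩ := G.hact z hz
  set ball : Config := ω ∩ ((fun w => w + xc) '' siteBall R₀) with hballdef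
  set Y : Config := enhAt φ xc ω with hY
  have hdisr : HasDISRPath adjT (ball ∪ (Set.range G.γ \ Y)) :=
    reroute hφ hmono hness ω xc G.γ G.inj G.exact'
  obtain ⟨γ1, hinj1, hmem1, hex1⟩ := hdisr
  have hballfin : ball.Finite := by
    apply Set.Finite.subset (Set.Finite.image _ (siteBall_finite R₀))
    intro w hw; exact hw.2
  have hmem1' : ∀ t, γ1 t ∈ ball ∪ Set.range G.γ := by
    intro t
    rcases hmem1 t with hca | hca
    · exact Set.mem_union_left _ hca
    · exact Set.mem_union_right _ hca.1
  obtain ⟨γ2, hinj2, hex2, hrange2, httop2, htbot2⟩ :=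
    tail_capture G.γ G.inj G.exact' G.ttop G.tbot ball hballfin γ1 hinj1 hex1 hmem1'
  -- each γ2-site is a γ1-site, hence in ball ∪ (range G.γ \ Y)
  have hmem2 : ∀ t, γ2 t ∈ ball ∪ (Set.range G.γ \ Y) := by
    intro t
    obtain ⟨t', ht'⟩ := hrange2 (Set.mem_range_self t)
    rw [← ht']
    exact hmem1 t'
  -- bound for sites of the ball
  have hballx : ∀ w ∈ ball, |(embedT δ w).1| ≤ b / 2 + 3 * δ * R₀ := by
    rintro w ⟨hw1, u, hu, hux⟩
    obtain ⟨v, hv, hvx⟩ := hxc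
    have hfz := G.hFx z hz
    have hw : w = u + xc := hux.symm
    have hzv : z = v + xc := hvx.symm
    have e1 : (embedT δ w).1 = (embedT δ u).1 + (embedT δ xc).1 := by
      rw [hw, embedT_add]; rfl
    have e2 : (embedT δ z).1 = (embedT δ v).1 + (embedT δ xc).1 := by
      rw [hzv, embedT_add]; rfl
    have hub := emb1_ball_bound hδ hu
    have hvb := emb1_ball_bound hδ (hφ.2.1 _ hv)
    have : |(embedT δ w).1| ≤ |(embedT δ z).1| + |(embedT δ u).1| + |(embedT δ v).1| := by
      have : (embedT δ w).1 = (embedT δ z).1 + ((embedT δ u).1 - (embedT δ v).1) := by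
        rw [e1, e2]; ring
      rw [this]
      calc |(embedT δ z).1 + ((embedT δ u).1 - (embedT δ v).1)|
          ≤ |(embedT δ z).1| + |(embedT δ u).1 - (embedT δ v).1| := abs_add_le _ _
        _ ≤ |(embedT δ z).1| + (|(embedT δ u).1| + |(embedT δ v).1|) := by
            have := abs_sub (embedT δ u).1 (embedT δ v).1
            linarith [abs_sub_abs_le_abs_sub (embedT δ u).1 (embedT δ v).1,
              abs_sub_le (embedT δ u).1 0 (embedT δ v).1]
        _ = |(embedT δ z).1| + |(embedT δ u).1| + |(embedT δ v).1| := by ring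
    calc |(embedT δ w).1| ≤ |(embedT δ z).1| + |(embedT δ u).1| + |(embedT δ v).1| := this
      _ ≤ b/2 + δ * (3/2) * R₀ + δ * (3/2) * R₀ := by linarith
      _ = b / 2 + 3 * δ * R₀ := by ring
  refine ⟨⟨γ2, hinj2, hex2, httop2, htbot2, G.F.erase z,
    fun w hw => G.hact w (Finset.mem_of_mem_erase hw),
    fun w hw => G.hFx w (Finset.mem_of_mem_erase hw), ?_, ?_⟩, ?_⟩
  · -- hmid
    intro i hmidi
    rcases hmem2 i with hca | hca
    · exact Or.inl hca.1
    · obtain ⟨⟨s, hs⟩, hnY⟩ := hca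
      rcases G.hmid s (by rw [hs]; exact hmidi) with hο | hο
      · exact Or.inl (hs ▸ hο)
      · right
        refine Finset.mem_erase.mpr ⟨?_, hs ▸ hο⟩
        intro hze
        rw [hze] at hnY
        rw [← hze] at hnY
        exact hnY (hze ▸ hxc)
  · -- hstrip
    intro i hmidi
    rcases hmem2 i with hca | hca
    · exact hballx _ hca
    · obtain ⟨⟨s, hs⟩, _⟩ := hca
      have := G.hstrip s (by rw [hs]; exact hmidi)
      rw [hs] at this
      exact this
  · exact Finset.card_erase_lt_of_mem hz

/-- Iterating: one can always remove all removable sites. -/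
lemma good_empty {R₀ : ℝ} {φ : Config → Config} {ω : Config} {δ b h : ℝ}
    (hφ : IsEnhancement R₀ φ) (hmono : Monotonic φ) (hness : ¬ Essential adjT φ)
    (hδ : 0 ≤ δ)
    (G : GoodPath R₀ φ ω δ b h) :
    ∃ G' : GoodPath R₀ φ ω δ b h, G'.F = ∅ := by
  classical
  obtain ⟨N, hN⟩ : ∃ N, G.F.card ≤ N := ⟨G.F.card, le_rfl⟩
  induction N generalizing G with
  | zero =>
    exact ⟨G, Finset.card_eq_zero.mp (Nat.le_zero.mp hN)⟩
  | succ N ih =>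
    rcases Finset.eq_empty_or_nonempty G.F with he | hne
    · exact ⟨G, he⟩
    · obtain ⟨G', hG'⟩ := good_step hφ hmono hness hδ G hne
      exact ih G' (by omega)

-- ## Initial good path from an enhanced crossing

lemma E_offset (δ : ℝ) (a : Site) (k : ℤ) :
    (embedT δ (a + (0, k))).2 = (embedT δ a).2 + (δ * (Real.sqrt 3 / 2)) * (k : ℝ) := by
  rw [embedT_add]
  show (embedT δ a).2 + (embedT δ (0, k)).2 = _
  rw [embedT_snd δ ((0, k) : Site)]

lemma convex_lt {a a' H t : ℝ} (ht0 : 0 ≤ t) (ht1 : t ≤ 1)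
    (ha : a < H) (ha' : a' < H) : (1 - t) * a + t * a' < H := by
  rcases eq_or_lt_of_le ht1 with he | hlt
  · rw [he]; simpa using ha'
  · have h1 : (1 - t) * a < (1 - t) * H := by
      apply mul_lt_mul_of_pos_left ha; linarith
    have h2 : t * a' ≤ t * H := mul_le_mul_of_nonneg_left ha'.le ht0
    nlinarith

lemma convex_gt {a a' H t : ℝ} (ht0 : 0 ≤ t) (ht1 : t ≤ 1)
    (ha : H < a) (ha' : H < a') : H < (1 - t) * a + t * a' := by
  have := convex_lt ht0 ht1 (neg_lt_neg ha) (neg_lt_neg ha')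
  linarith

lemma seg_snd {u v w : ℝ × ℝ} (hw : w ∈ seg u v) :
    ∃ t : ℝ, 0 ≤ t ∧ t ≤ 1 ∧ w.1 = (1 - t) * u.1 + t * v.1 ∧
      w.2 = (1 - t) * u.2 + t * v.2 := by
  obtain ⟨t, ht0, ht1, hw⟩ := hw
  refine ⟨t, ht0, ht1, ?_, ?_⟩ <;> rw [hw] <;> simp [Prod.smul_def, smul_eq_mul]

lemma good_init {R₀ : ℝ} {φ : Config → Config} {ω : Config} {α : Site → Bool}
    {δ b h : ℝ} (hδ : 0 < δ) (hh : 0 < h) (hR : 0 ≤ R₀)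
    (hcr : VertCrossing adjT (embedT δ) (enhanced φ ω α) b h) :
    Nonempty (GoodPath R₀ φ ω δ b h) := by
  classical
  obtain ⟨n, x, hn, hadj, hinj, hmem, hrect, ⟨wt, hwtseg, hwttop⟩, ⟨wb, hwbseg, hwbbot⟩⟩ := hcr
  set c : ℝ := δ * (Real.sqrt 3 / 2) with hcdef
  have hc0 : 0 < c := by
    have : (0:ℝ) < Real.sqrt 3 := Real.sqrt_pos.mpr (by norm_num)
    positivity
  set E : Site → ℝ := fun z => (embedT δ z).2 with hEdef
  -- the first and last witness sites lie above/below the rectangle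
  have hx1 : E (x 1) < h / 2 ∧ -(h/2) < E (x 1) := by
    have := hrect 1 le_rfl hn
    exact ⟨this.2.2.2, this.2.2.1⟩
  have hxn : E (x n) < h / 2 ∧ -(h/2) < E (x n) := by
    have := hrect n hn le_rfl
    exact ⟨this.2.2.2, this.2.2.1⟩
  have htop : h / 2 ≤ E (x 0) := by
    by_contra hcon
    push_neg at hcon
    obtain ⟨t, ht0, ht1, _, h2⟩ := seg_snd hwtseg
    have := hwttop.2
    rw [this] at h2
    have := convex_lt ht0 ht1 hcon hx1.1
    linarith
  have hbot : E (x (n + 1)) ≤ -(h / 2) := by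
    by_contra hcon
    push_neg at hcon
    obtain ⟨t, ht0, ht1, _, h2⟩ := seg_snd hwbseg
    have := hwbbot.2
    rw [this] at h2
    have := convex_gt ht0 ht1 hxn.2 hcon
    linarith
  -- extract a self-repelling path
  obtain ⟨m, q, hq0, hqm, hqadj, hqinj, hqsites, hqexact⟩ := exact_subpath x n hadj hinj
  have hEq0 : h / 2 ≤ E (q 0) := by rw [hq0]; exact htop
  have hEqm : E (q m) ≤ -(h / 2) := by rw [hqm]; exact hbot
  have hm1 : 1 ≤ m := by
    rcases Nat.eq_zero_or_pos m with he | hp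
    · exfalso
      rw [he] at hqm
      rw [hq0] at hqm
      have := hinj 0 (by omega) (n+1) le_rfl hqm
      omega
    · exact hp
  -- q-interior sites are witness-interior sites, hence in the rectangle
  have hqint : ∀ t, 0 < t → t < m → embedT δ (q t) ∈ rectR b h := by
    intro t ht0 htm
    obtain ⟨k, hk, hqk⟩ := hqsites t (by omega)
    have hk0 : k ≠ 0 := by
      intro he
      rw [he] at hqk
      rw [← hq0] at hqk
      have := hqinj t (by omega) 0 (by omega) hqk
      omega
    have hkn : k ≠ n + 1 := by
      intro he
      rw [he] at hqk
      rw [← hqm] at hqk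
      have := hqinj t (by omega) m (by omega) hqk
      omega
    rw [hqk]
    exact hrect k (by omega) (by omega)
  have hqmem : ∀ t ≤ m, q t ∈ enhanced φ ω α := by
    intro t ht
    obtain ⟨k, hk, hqk⟩ := hqsites t ht
    rw [hqk]
    exact hmem k hk
  -- bounds on interior heights
  have hqintE : ∀ t, 0 < t → t < m → -(h/2) < E (q t) ∧ E (q t) < h / 2 := by
    intro t ht0 htm
    have := hqint t ht0 htm
    exact ⟨this.2.2.1, this.2.2.2⟩
  have hqint1 : ∀ t, 0 < t → t < m → |(embedT δ (q t)).1| < b / 2 := by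
    intro t ht0 htm
    have := hqint t ht0 htm
    rw [abs_lt]
    exact ⟨by linarith [this.1], this.2.1⟩
  -- the doubly-infinite path
  set γ₀ : ℤ → Site := fun i =>
    if i < 0 then q 0 + (0, -i) else if i ≤ (m:ℤ) then q i.toNat else q m + (0, (m:ℤ) - i)
    with hγ₀
  have hneg : ∀ i : ℤ, i < 0 → γ₀ i = q 0 + (0, -i) := by
    intro i hi; simp only [hγ₀, if_pos hi]
  have hmidv : ∀ i : ℤ, 0 ≤ i → i ≤ (m:ℤ) → γ₀ i = q i.toNat := by
    intro i h0 h1; simp only [hγ₀, if_neg (by omega : ¬ i < 0), if_pos h1]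
  have hpos : ∀ i : ℤ, (m:ℤ) < i → γ₀ i = q m + (0, (m:ℤ) - i) := by
    intro i hi; simp only [hγ₀, if_neg (by omega : ¬ i < 0), if_neg (by omega : ¬ i ≤ (m:ℤ))]
  have hEneg : ∀ i : ℤ, i < 0 → E (γ₀ i) = E (q 0) + c * (-i : ℤ) := by
    intro i hi
    rw [hneg i hi]
    exact E_offset δ (q 0) (-i)
  have hEpos : ∀ i : ℤ, (m:ℤ) < i → E (γ₀ i) = E (q m) + c * ((m:ℤ) - i : ℤ) := by
    intro i hi
    rw [hpos i hi]
    exact E_offset δ (q m) ((m:ℤ) - i)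
  have hEneglb : ∀ i : ℤ, i < 0 → E (q 0) + c ≤ E (γ₀ i) := by
    intro i hi
    rw [hEneg i hi]
    have : (1:ℝ) ≤ ((-i : ℤ) : ℝ) := by exact_mod_cast (by omega : (1:ℤ) ≤ -i)
    nlinarith
  have hEposub : ∀ i : ℤ, (m:ℤ) < i → E (γ₀ i) ≤ E (q m) - c := by
    intro i hi
    rw [hEpos i hi]
    have : ((m - i : ℤ) : ℝ) ≤ -1 := by exact_mod_cast (by omega : (m - i : ℤ) ≤ -1)
    nlinarith
  -- all mid-region values are q-values with E ≤ E (q 0)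
  have hEmidle : ∀ t ≤ m, E (q t) ≤ E (q 0) := by
    intro t ht
    rcases Nat.eq_zero_or_pos t with he | hp
    · rw [he]
    · rcases Nat.lt_or_ge t m with hlt | hge
      · linarith [(hqintE t hp hlt).2]
      · have : t = m := by omega
        rw [this]; linarith
  have hEmidgt : ∀ t ≤ m, E (q m) ≤ E (q t) := by
    intro t ht
    rcases Nat.lt_or_ge t m with hlt | hge
    · rcases Nat.eq_zero_or_pos t with he | hp
      · rw [he]; linarith
      · linarith [(hqintE t hp hlt).1]
    · have : t = m := by omega
      rw [this]
  -- injectivity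
  have hEr2le : ∀ j : ℤ, 0 ≤ j → j ≤ (m:ℤ) → E (γ₀ j) ≤ E (q 0) := by
    intro j h0 h1
    rw [hmidv j h0 h1]
    exact hEmidle j.toNat (by omega)
  have hEr2ge : ∀ j : ℤ, 0 ≤ j → j ≤ (m:ℤ) → E (q m) ≤ E (γ₀ j) := by
    intro j h0 h1
    rw [hmidv j h0 h1]
    exact hEmidgt j.toNat (by omega)
  have hinj₀ : Function.Injective γ₀ := by
    intro i j hij
    by_contra hne
    have hEij : E (γ₀ i) = E (γ₀ j) := congrArg E hij
    rcases lt_or_ge i 0 with hi | hi <;> rcases lt_or_ge j 0 with hj | hj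
    · rw [hneg i hi, hneg j hj] at hij
      have := congrArg Prod.snd hij
      simp only [Prod.snd_add] at this
      omega
    · rcases le_or_gt j (m:ℤ) with hjm | hjm
      · have h1 := hEneglb i hi
        have h2 := hEr2le j hj hjm
        linarith
      · have h1 := hEneglb i hi
        have h2 := hEposub j hjm
        linarith
    · rcases le_or_gt i (m:ℤ) with him | him
      · have h1 := hEneglb j hj
        have h2 := hEr2le i hi him
        linarith
      · have h1 := hEneglb j hj
        have h2 := hEposub i him
        linarith
    · rcases le_or_gt i (m:ℤ) with him | him <;> rcases le_or_gt j (m:ℤ) with hjm | hjm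
      · rw [hmidv i hi him, hmidv j hj hjm] at hij
        have := hqinj i.toNat (by omega) j.toNat (by omega) hij
        omega
      · have h1 := hEr2ge i hi him
        have h2 := hEposub j hjm
        linarith
      · have h1 := hEr2ge j hj hjm
        have h2 := hEposub i him
        linarith
      · rw [hpos i him, hpos j hjm] at hij
        have := congrArg Prod.snd hij
        simp only [Prod.snd_add] at this
        omega
  -- small adjacency helpers
  have adjT_off0 : ∀ (a : Site) (k : ℤ), adjT (a + (0, k)) a ↔ (k = 1 ∨ k = -1) := by
    intro a k
    rw [adjT_iff']
    simp only [Prod.fst_add, Prod.snd_add]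
    omega
  have adjT_off0' : ∀ (a : Site) (k : ℤ), adjT a (a + (0, k)) ↔ (k = 1 ∨ k = -1) := by
    intro a k
    rw [adjT_iff']
    simp only [Prod.fst_add, Prod.snd_add]
    omega
  have hEadjT : ∀ {z w : Site}, adjT z w → |E z - E w| ≤ c := by
    intro z w hzw
    exact adjT_emb2_le hδ.le hzw
  -- characterization of adjacency along γ₀
  have key : ∀ i j : ℤ, i < j → (adjT (γ₀ i) (γ₀ j) ↔ j = i + 1) := by
    intro i j hij
    rcases lt_or_ge i 0 with hi | hi
    · rcases lt_or_ge j 0 with hj | hj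
      · rw [hneg i hi, hneg j hj, adjT_offset]
        omega
      · rcases eq_or_lt_of_le hj with hj0 | hj0
        · -- j = 0
          have e0 : γ₀ j = q 0 := by
            rw [hmidv j hj (by omega), ← hj0]
            simp
          rw [hneg i hi, e0, adjT_off0]
          omega
        · -- 1 ≤ j: far apart
          have hne2 : ¬ adjT (γ₀ i) (γ₀ j) := by
            intro hadj'
            have hE := abs_le.mp (hEadjT hadj')
            have h1 := hEneglb i hi
            rcases le_or_gt j (m:ℤ) with hjm | hjm
            · have h2 : E (γ₀ j) < E (q 0) := by
                rw [hmidv j hj hjm]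
                have ht0 : 0 < j.toNat := by omega
                rcases Nat.lt_or_ge j.toNat m with hl | hg
                · linarith [(hqintE j.toNat ht0 hl).2]
                · have : j.toNat = m := by omega
                  rw [this]; linarith
              linarith
            · have h2 := hEposub j hjm
              linarith
          constructor
          · intro hadj'; exact absurd hadj' hne2
          · intro hj1; omega
    · rcases le_or_gt i (m:ℤ) with him | him
      · rcases le_or_gt j (m:ℤ) with hjm | hjm
        · rw [hmidv i hi him, hmidv j (by omega) hjm]
          constructor
          · intro hadj'
            have := hqexact i.toNat (by omega) j.toNat (by omega) hadj'
            omega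
          · intro hj1
            have harr : j.toNat = i.toNat + 1 := by omega
            rw [harr]
            exact hqadj i.toNat (by omega)
        · rcases eq_or_lt_of_le him with him' | him'
          · -- i = m: junction on the bottom ray
            have em : γ₀ i = q m := by
              rw [hmidv i hi him, him']
              simp
            rw [em, hpos j hjm, adjT_off0']
            omega
          · have hne2 : ¬ adjT (γ₀ i) (γ₀ j) := by
              intro hadj'
              have hE := abs_le.mp (hEadjT hadj')
              have h2 := hEposub j hjm
              have h3 : E (q m) < E (γ₀ i) := by
                rw [hmidv i hi him]
                have htm : i.toNat < m := by omega
                rcases Nat.eq_zero_or_pos i.toNat with h0 | h0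
                · rw [h0]; linarith
                · linarith [(hqintE i.toNat h0 htm).1]
              linarith
            constructor
            · intro hadj'; exact absurd hadj' hne2
            · intro hj1; omega
      · rw [hpos i him, hpos j (by omega), adjT_offset]
        omega
  have hex₀ : ∀ i j : ℤ, adjT (γ₀ i) (γ₀ j) ↔ (j = i + 1 ∨ i = j + 1) := by
    intro i j
    rcases lt_trichotomy i j with hlt | heq | hgt
    · constructor
      · intro ha; exact Or.inl ((key i j hlt).mp ha)
      · rintro (hr | hr)
        · exact (key i j hlt).mpr hr
        · omega
    · rw [heq]
      exact iff_of_false (adjT_irrefl _) (by omega)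
    · constructor
      · intro ha; exact Or.inr ((key j i hgt).mp (adjT_symm ha))
      · rintro (hr | hr)
        · omega
        · exact adjT_symm ((key j i hgt).mpr hr)
  -- vertical escape
  have httop₀ : Tendsto (fun i => (γ₀ i).2) atBot atTop := by
    rw [Filter.tendsto_atBot_atTop]
    intro B
    refine ⟨min (-1) ((q 0).2 - B), fun i hi => ?_⟩
    have hi0 : i < 0 := by
      have := le_min_iff.mp hi
      omega
    rw [hneg i hi0]
    have := le_min_iff.mp hi
    simp only [Prod.snd_add]
    omega
  have htbot₀ : Tendsto (fun i => (γ₀ i).2) atTop atBot := by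
    rw [Filter.tendsto_atTop_atBot]
    intro B
    refine ⟨max ((m:ℤ) + 1) ((q m).2 + (m:ℤ) - B), fun i hi => ?_⟩
    have him : (m:ℤ) < i := by
      have := max_le_iff.mp hi
      omega
    rw [hpos i him]
    have := max_le_iff.mp hi
    simp only [Prod.snd_add]
    omega
  -- the removable set
  set F₀ : Finset Site :=
    (((Finset.range (m+1)).filter (fun t => 0 < t ∧ t < m)).image q).filter
      (fun z => z ∉ ω) with hF₀
  -- middle-band characterization
  have hmidchar : ∀ i : ℤ, |(embedT δ (γ₀ i)).2| < h / 2 →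
      γ₀ i = q i.toNat ∧ 0 < i.toNat ∧ i.toNat < m := by
    intro i hEi
    have habs : -(h/2) < E (γ₀ i) ∧ E (γ₀ i) < h / 2 := abs_lt.mp hEi
    rcases lt_or_ge i 0 with hi | hi
    · exfalso
      have h1 := hEneglb i hi
      linarith [habs.2]
    rcases le_or_gt i (m:ℤ) with him | him
    · have hv := hmidv i hi him
      have ht0 : 0 < i.toNat := by
        by_contra hcon
        have : i = 0 := by omega
        rw [this] at hv
        have hEv : E (γ₀ (0:ℤ)) = E (q (0:ℤ).toNat) := congrArg E hv
        simp only [Int.toNat_zero] at hEv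
        rw [this] at habs
        rw [hEv] at habs
        linarith [habs.2]
      have htm : i.toNat < m := by
        by_contra hcon
        have : i = (m:ℤ) := by omega
        have hEv : E (γ₀ i) = E (q i.toNat) := congrArg E hv
        have : i.toNat = m := by omega
        rw [this] at hEv
        rw [hEv] at habs
        linarith [habs.1]
      exact ⟨hv, ht0, htm⟩
    · exfalso
      have h2 := hEposub i him
      linarith [habs.1]
  refine ⟨⟨γ₀, hinj₀, hex₀, httop₀, htbot₀, F₀, ?_, ?_, ?_, ?_⟩⟩
  · -- hact
    intro z hz
    rw [hF₀] at hz
    obtain ⟨hz1, hz2⟩ := Finset.mem_filter.mp hz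
    obtain ⟨t, ht, rfl⟩ := Finset.mem_image.mp hz1
    obtain ⟨_, ht0, htm⟩ := Finset.mem_filter.mp ht
    rcases hqmem t (by omega) with hο | hο
    · exact absurd hο hz2
    · obtain ⟨x₀, _, hin⟩ := hο
      exact ⟨x₀, hin⟩
  · -- hFx
    intro z hz
    rw [hF₀] at hz
    obtain ⟨hz1, _⟩ := Finset.mem_filter.mp hz
    obtain ⟨t, ht, rfl⟩ := Finset.mem_image.mp hz1
    obtain ⟨_, ht0, htm⟩ := Finset.mem_filter.mp ht
    exact (hqint1 t ht0 htm).le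
  · -- hmid
    intro i hEi
    obtain ⟨hv, ht0, htm⟩ := hmidchar i hEi
    by_cases hω : γ₀ i ∈ ω
    · exact Or.inl hω
    · right
      rw [hF₀]
      refine Finset.mem_filter.mpr ⟨?_, hω⟩
      refine Finset.mem_image.mpr ⟨i.toNat, ?_, hv.symm⟩
      exact Finset.mem_filter.mpr ⟨Finset.mem_range.mpr (by omega), ⟨ht0, htm⟩⟩
  · -- hstrip
    intro i hEi
    obtain ⟨hv, ht0, htm⟩ := hmidchar i hEi
    rw [hv]
    have := (hqint1 i.toNat ht0 htm).le
    have hnn : (0:ℝ) ≤ 3 * δ * R₀ := by positivity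
    linarith



-- ## Final extraction of a true crossing

lemma convex_abs_le {p q B t : ℝ} (ht0 : 0 ≤ t) (ht1 : t ≤ 1)
    (hp : |p| ≤ B) (hq : |q| ≤ B) : |(1 - t) * p + t * q| ≤ B := by
  calc |(1 - t) * p + t * q| ≤ |(1 - t) * p| + |t * q| := abs_add_le _ _
    _ = (1 - t) * |p| + t * |q| := by
        rw [abs_mul, abs_mul, abs_of_nonneg (by linarith : (0:ℝ) ≤ 1 - t),
          abs_of_nonneg ht0]
    _ ≤ (1 - t) * B + t * B := by
        have h1 : (1 - t) * |p| ≤ (1 - t) * B :=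
          mul_le_mul_of_nonneg_left hp (by linarith)
        have h2 : t * |q| ≤ t * B := mul_le_mul_of_nonneg_left hq ht0
        linarith
    _ = B := by ring

lemma good_extract {R₀ : ℝ} {φ : Config → Config} {ω : Config} {δ b h b'' h'' : ℝ}
    (hδ : 0 < δ) (hh : 0 < h)
    (hb'' : b / 2 + 3 * δ * R₀ < b'' / 2)
    (hh''c : Real.sqrt 3 * δ < h'')
    (hh'' : h'' ≤ h - Real.sqrt 3 * δ)
    (G : GoodPath R₀ φ ω δ b h) (hF : G.F = ∅) :
    VertCrossing adjT (embedT δ) ω b'' h'' := by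
  classical
  set c : ℝ := δ * (Real.sqrt 3 / 2) with hcdef
  have hs3 : (0:ℝ) < Real.sqrt 3 := Real.sqrt_pos.mpr (by norm_num)
  have hc0 : 0 < c := by rw [hcdef]; positivity
  have h''0 : 0 < h'' := lt_trans (by positivity) hh''c
  have hch : h'' / 2 ≤ h / 2 - c := by rw [hcdef]; nlinarith
  have hc2 : c < h'' / 2 := by rw [hcdef]; nlinarith
  set E : ℤ → ℝ := fun i => (embedT δ (G.γ i)).2 with hEdef
  have hreal : ∀ i, |E i| < h / 2 → G.γ i ∈ ω := by
    intro i hi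
    rcases G.hmid i hi with hο | hο
    · exact hο
    · rw [hF] at hο; exact absurd hο (Finset.notMem_empty _)
  have hstrip : ∀ i, |E i| < h / 2 → |(embedT δ (G.γ i)).1| ≤ b / 2 + 3 * δ * R₀ :=
    G.hstrip
  have hstep : ∀ i : ℤ, |E (i + 1) - E i| ≤ c := by
    intro i
    have hadj : adjT (G.γ i) (G.γ (i + 1)) := (G.exact' i (i + 1)).mpr (Or.inl rfl)
    have := adjT_emb2_le hδ.le hadj
    rw [abs_sub_comm] at this
    exact this
  have hEeq : ∀ i, E i = c * (((G.γ i).2 : ℤ) : ℝ) := by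
    intro i
    rw [hEdef]
    exact embedT_snd δ (G.γ i)
  have hcast_top : Tendsto (fun i : ℤ => (((G.γ i).2 : ℤ) : ℝ)) atBot atTop :=
    (tendsto_intCast_atTop_atTop).comp G.ttop
  have hcast_bot : Tendsto (fun i : ℤ => (((G.γ i).2 : ℤ) : ℝ)) atTop atBot := by
    rw [Filter.tendsto_atTop_atBot]
    intro B
    obtain ⟨N, hN⟩ := (Filter.tendsto_atTop_atBot.mp G.tbot) ⌊B⌋
    refine ⟨N, fun a ha => ?_⟩
    have h1 := hN a ha
    calc (((G.γ a).2 : ℤ) : ℝ) ≤ ((⌊B⌋ : ℤ) : ℝ) := by exact_mod_cast h1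
      _ ≤ B := Int.floor_le B
  have hEtop : Tendsto E atBot atTop := by
    apply Tendsto.congr (fun i => (hEeq i).symm)
    exact Tendsto.const_mul_atTop hc0 hcast_top
  have hEbot : Tendsto E atTop atBot := by
    apply Tendsto.congr (fun i => (hEeq i).symm)
    exact Tendsto.const_mul_atBot hc0 hcast_bot
  -- the last index above level h''/2
  obtain ⟨k, hkA, hkub⟩ : ∃ k, (h'' / 2 ≤ E k) ∧ ∀ z, h'' / 2 ≤ E z → z ≤ k := by
    have hbd : ∃ bd : ℤ, ∀ z, h'' / 2 ≤ E z → z ≤ bd := by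
      obtain ⟨N, hN⟩ := (Filter.eventually_atTop).mp (hEbot.eventually_le_atBot (h'' / 2 - 1))
      refine ⟨N, fun z hz => ?_⟩
      by_contra hcon
      have := hN z (by omega)
      linarith
    have hinh : ∃ z : ℤ, h'' / 2 ≤ E z := (hEtop.eventually_ge_atTop (h'' / 2)).exists
    obtain ⟨k, hk1, hk2⟩ := Int.exists_greatest_of_bdd hbd hinh
    exact ⟨k, hk1, hk2⟩
  have hless : ∀ i, k < i → E i < h'' / 2 := by
    intro i hi
    by_contra hcon
    push_neg at hcon
    have := hkub i hcon
    omega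
  -- the first index at or below level -h''/2 after k
  obtain ⟨l, ⟨hlk, hlE⟩, hlb⟩ : ∃ l, (k + 1 ≤ l ∧ E l ≤ -(h'' / 2)) ∧
      ∀ z, (k + 1 ≤ z ∧ E z ≤ -(h'' / 2)) → l ≤ z := by
    have hbd : ∃ bd : ℤ, ∀ z, (k + 1 ≤ z ∧ E z ≤ -(h'' / 2)) → bd ≤ z :=
      ⟨k + 1, fun z hz => hz.1⟩
    have hinh : ∃ z : ℤ, k + 1 ≤ z ∧ E z ≤ -(h'' / 2) := by
      obtain ⟨N, hN⟩ := (Filter.eventually_atTop).mp (hEbot.eventually_le_atBot (-(h'' / 2)))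
      exact ⟨max N (k + 1), le_max_right _ _, hN _ (le_max_left _ _)⟩
    obtain ⟨l, hl1, hl2⟩ := Int.exists_least_of_bdd hbd hinh
    exact ⟨l, hl1, hl2⟩
  have hgtr : ∀ i, k + 1 ≤ i → i < l → -(h'' / 2) < E i := by
    intro i h1 h2
    by_contra hcon
    push_neg at hcon
    have := hlb i ⟨h1, hcon⟩
    omega
  -- basic height facts
  have hEk_lt : E k < h / 2 := by
    by_contra hcon
    push_neg at hcon
    have h1 := abs_le.mp (hstep k)
    have : h'' / 2 ≤ E (k + 1) := by linarith
    have := hkub (k + 1) this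
    omega
  have hl2 : k + 2 ≤ l := by
    by_contra hcon
    push_neg at hcon
    have hlk1 : l = k + 1 := by omega
    have h1 := abs_le.mp (hstep k)
    rw [hlk1] at hlE
    linarith
  have hEl_gt : -(h / 2) < E l := by
    have h1 := hgtr (l - 1) (by omega) (by omega)
    have h2 := abs_le.mp (hstep (l - 1))
    have : l - 1 + 1 = l := by ring
    rw [this] at h2
    linarith
  have hmidE : ∀ i, k < i → i < l → -(h'' / 2) < E i ∧ E i < h'' / 2 :=
    fun i h1 h2 => ⟨hgtr i (by omega) h2, hless i h1⟩
  -- the crossing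
  set n : ℕ := (l - k - 1).toNat with hn
  have hncast : (n : ℤ) = l - k - 1 := Int.toNat_of_nonneg (by omega)
  have hn1 : 1 ≤ n := by omega
  set xw : ℕ → Site := fun i => G.γ (k + (i : ℤ)) with hxw
  -- mid-band membership of all used sites
  have habs0 : |E k| < h / 2 := by
    rw [abs_lt]
    constructor
    · linarith
    · exact hEk_lt
  have habsl : |E l| < h / 2 := by
    rw [abs_lt]
    constructor
    · exact hEl_gt
    · linarith
  have habsmid : ∀ i : ℤ, k < i → i < l → |E i| < h / 2 := by
    intro i h1 h2
    obtain ⟨hm1, hm2⟩ := hmidE i h1 h2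
    rw [abs_lt]
    constructor <;> linarith
  refine ⟨n, xw, hn1, ?_, ?_, ?_, ?_, ?_, ?_⟩
  · -- adjacency
    intro i hi
    have harr : k + ((i + 1 : ℕ) : ℤ) = (k + (i : ℤ)) + 1 := by push_cast; ring
    show adjT (G.γ (k + (i:ℤ))) (G.γ (k + ((i+1 : ℕ):ℤ)))
    rw [harr]
    exact (G.exact' _ _).mpr (Or.inl rfl)
  · -- injectivity
    intro i hi j hj hij
    have := G.inj hij
    omega
  · -- membership
    intro i hi
    apply hreal
    show |E (k + (i:ℤ))| < h / 2
    rcases Nat.eq_zero_or_pos i with h0 | h0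
    · rw [h0]; simpa using habs0
    · rcases Nat.lt_or_ge i (n + 1) with hlt | hge
      · exact habsmid _ (by omega) (by omega)
      · have : i = n + 1 := by omega
        rw [this]
        have : k + ((n + 1 : ℕ) : ℤ) = l := by push_cast; omega
        rw [this]
        exact habsl
  · -- interior sites in the rectangle
    intro i h1i hin
    have hidx1 : k < k + (i : ℤ) := by omega
    have hidx2 : k + (i : ℤ) < l := by omega
    obtain ⟨hm1, hm2⟩ := hmidE _ hidx1 hidx2
    have hmidb := habsmid _ hidx1 hidx2
    have hstr := hstrip _ hmidb
    have hstr' := abs_le.mp hstr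
    refine ⟨by linarith, by linarith, ?_, ?_⟩
    · show -(h''/2) < E (k + (i:ℤ)); exact hm1
    · exact hm2
  · -- top segment
    set u := embedT δ (xw 0) with hu
    set v := embedT δ (xw 1) with hv
    have hu2 : u.2 = E k := by rw [hu, hxw]; simp [hEdef]
    have hv2 : v.2 = E (k + 1) := by rw [hv, hxw]; simp [hEdef]
    have hEk1 : E (k + 1) < h'' / 2 := hless (k + 1) (by omega)
    have hD : 0 < E k - E (k + 1) := by linarith
    set t : ℝ := (E k - h'' / 2) / (E k - E (k + 1)) with ht
    have ht0 : 0 ≤ t := div_nonneg (by linarith) hD.le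
    have ht1 : t ≤ 1 := by
      rw [ht, div_le_one hD]
      linarith
    have htD : t * (E k - E (k + 1)) = E k - h'' / 2 := by
      rw [ht]; field_simp
    refine ⟨(1 - t) • u + t • v, ⟨t, ht0, ht1, rfl⟩, ?_, ?_⟩
    · -- |w.1| ≤ b''/2
      show |((1 - t) • u + t • v).1| ≤ b'' / 2
      have hw1 : ((1 - t) • u + t • v).1 = (1 - t) * u.1 + t * v.1 := by
        simp [Prod.smul_def, smul_eq_mul]
      rw [hw1]
      have hsu : |u.1| ≤ b / 2 + 3 * δ * R₀ := by
        rw [hu, hxw]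
        have := hstrip k habs0
        simpa using this
      have hsv : |v.1| ≤ b / 2 + 3 * δ * R₀ := by
        rw [hv, hxw]
        have hmidb := habsmid (k + 1) (by omega) (by omega)
        have := hstrip (k + 1) hmidb
        simpa using this
      exact convex_abs_le ht0 ht1 (by linarith) (by linarith)
    · -- w.2 = h''/2
      show ((1 - t) • u + t • v).2 = h'' / 2
      have hw2 : ((1 - t) • u + t • v).2 = (1 - t) * u.2 + t * v.2 := by
        simp [Prod.smul_def, smul_eq_mul]
      rw [hw2, hu2, hv2]
      linear_combination -htD
  · -- bottom segment
    set u := embedT δ (xw n) with hu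
    set v := embedT δ (xw (n + 1)) with hv
    have hidxn : k + (n : ℤ) = l - 1 := by omega
    have hidxn1 : k + ((n + 1 : ℕ) : ℤ) = l := by push_cast; omega
    have hxwn : xw n = G.γ (l - 1) := by
      show G.γ (k + (n : ℤ)) = _
      rw [hidxn]
    have hxwn1 : xw (n + 1) = G.γ l := by
      show G.γ (k + ((n + 1 : ℕ) : ℤ)) = _
      rw [hidxn1]
    have hu2 : u.2 = E (l - 1) := by rw [hu, hxwn]
    have hv2 : v.2 = E l := by rw [hv, hxwn1]
    have hEl1 : -(h'' / 2) < E (l - 1) := hgtr (l - 1) (by omega) (by omega)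
    have hD : 0 < E (l - 1) - E l := by linarith
    set t : ℝ := (E (l - 1) - (-(h'' / 2))) / (E (l - 1) - E l) with ht
    have ht0 : 0 ≤ t := div_nonneg (by linarith) hD.le
    have ht1 : t ≤ 1 := by
      rw [ht, div_le_one hD]
      linarith
    have htD : t * (E (l - 1) - E l) = E (l - 1) + h'' / 2 := by
      rw [ht]; field_simp; ring
    refine ⟨(1 - t) • u + t • v, ⟨t, ht0, ht1, rfl⟩, ?_, ?_⟩
    · show |((1 - t) • u + t • v).1| ≤ b'' / 2
      have hw1 : ((1 - t) • u + t • v).1 = (1 - t) * u.1 + t * v.1 := by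
        simp [Prod.smul_def, smul_eq_mul]
      rw [hw1]
      have hsu : |u.1| ≤ b / 2 + 3 * δ * R₀ := by
        rw [hu, hxwn]
        have hmidb := habsmid (l - 1) (by omega) (by omega)
        exact hstrip _ hmidb
      have hsv : |v.1| ≤ b / 2 + 3 * δ * R₀ := by
        rw [hv, hxwn1]
        exact hstrip l habsl
      exact convex_abs_le ht0 ht1 (by linarith) (by linarith)
    · show ((1 - t) • u + t • v).2 = -(h'' / 2)
      have hw2 : ((1 - t) • u + t • v).2 = (1 - t) * u.2 + t * v.2 := by
        simp [Prod.smul_def, smul_eq_mul]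
      rw [hw2, hu2, hv2]
      linear_combination -htD

/-- Master deterministic lemma: an enhanced crossing of `R(b,h)` yields a true
crossing of a slightly wider and shorter rectangle, for a monotonic
nonessential enhancement. -/
lemma master {R₀ : ℝ} {φ : Config → Config}
    (hφ : IsEnhancement R₀ φ) (hmono : Monotonic φ) (hness : ¬ Essential adjT φ)
    {ω : Config} {α : Site → Bool} {δ b h b'' h'' : ℝ}
    (hδ : 0 < δ) (hh : 0 < h)
    (hb'' : b / 2 + 3 * δ * R₀ < b'' / 2)
    (hh''c : Real.sqrt 3 * δ < h'')
    (hh'' : h'' ≤ h - Real.sqrt 3 * δ)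
    (hcr : VertCrossing adjT (embedT δ) (enhanced φ ω α) b h) :
    VertCrossing adjT (embedT δ) ω b'' h'' := by
  obtain ⟨G⟩ := good_init (R₀ := R₀) (φ := φ) hδ hh hφ.1 hcr
  obtain ⟨G', hG'⟩ := good_empty hφ hmono hness hδ.le G
  exact good_extract hδ hh hb'' hh''c hh'' G' hG'


-- ## Measurability of the crossing event

lemma vertCrossing_mono {adj : Site → Site → Prop} {e : Site → ℝ × ℝ} {ω ω' : Config}
    {b h : ℝ} (hsub : ω ⊆ ω') (hc : VertCrossing adj e ω b h) :
    VertCrossing adj e ω' b h := by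
  obtain ⟨n, x, h1, h2, h3, h4, h5, h6, h7⟩ := hc
  exact ⟨n, x, h1, h2, h3, fun i hi => hsub (h4 i hi), h5, h6, h7⟩

/-- Geometric (configuration-free) part of the crossing event, in terms of a
finite list of sites. -/
def crossOK (e : Site → ℝ × ℝ) (b h : ℝ) (l : List Site) : Prop :=
  ∃ n : ℕ, l.length = n + 2 ∧ 1 ≤ n ∧
    (letI x : ℕ → Site := fun i => l.getD i ((0, 0) : Site)
     (∀ i ≤ n, adjT (x i) (x (i + 1))) ∧
     (∀ i ≤ n + 1, ∀ j ≤ n + 1, x i = x j → i = j) ∧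
     (∀ i, 1 ≤ i → i ≤ n → e (x i) ∈ rectR b h) ∧
     (seg (e (x 0)) (e (x 1)) ∩ topSide b h).Nonempty ∧
     (seg (e (x n)) (e (x (n + 1))) ∩ botSide b h).Nonempty)

lemma crossEvent_eq (e : Site → ℝ × ℝ) (b h : ℝ) :
    {η : Site → Bool | VertCrossing adjT e (toConfig η) b h} =
      ⋃ (l : List Site) (_ : crossOK e b h l), {η | ∀ z ∈ l, η z = true} := by
  ext η
  simp only [Set.mem_setOf_eq, Set.mem_iUnion]
  constructor
  · rintro ⟨n, x, h1, h2, h3, h4, h5, h6, h7⟩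
    refine ⟨(List.range (n + 2)).map x, ⟨n, by simp, h1, ?_⟩, ?_⟩
    · have hget : ∀ i, i < n + 2 →
          ((List.range (n + 2)).map x).getD i ((0,0) : Site) = x i := by
        intro i hi
        rw [List.getD_eq_getElem?_getD]
        simp [List.getElem?_range, hi]
      refine ⟨?_, ?_, ?_, ?_, ?_⟩
      · intro i hi
        dsimp only
        rw [hget i (by omega), hget (i+1) (by omega)]
        exact h2 i hi
      · intro i hi j hj hij
        dsimp only at hij
        rw [hget i (by omega), hget j (by omega)] at hij
        exact h3 i hi j hj hij
      · intro i hi1 hi2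
        dsimp only
        rw [hget i (by omega)]
        exact h5 i hi1 hi2
      · dsimp only
        rw [hget 0 (by omega), hget 1 (by omega)]
        exact h6
      · dsimp only
        rw [hget n (by omega), hget (n+1) (by omega)]
        exact h7
    · intro z hz
      obtain ⟨i, hi, rfl⟩ := List.mem_map.mp hz
      obtain hi' := List.mem_range.mp hi
      exact h4 i (by omega)
  · rintro ⟨l, ⟨n, hlen, hn, hadj, hinjl, hrect, htop, hbot⟩, hopen⟩
    refine ⟨n, fun i => l.getD i ((0,0) : Site), hn, hadj, hinjl, ?_, hrect, htop, hbot⟩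
    intro i hi
    have hilen : i < l.length := by omega
    have : l.getD i ((0,0) : Site) ∈ l := by
      rw [List.getD_eq_getElem l _ hilen]
      exact List.getElem_mem hilen
    exact hopen _ this
  
lemma measurable_crossEvent (e : Site → ℝ × ℝ) (b h : ℝ) :
    MeasurableSet {η : Site → Bool | VertCrossing adjT e (toConfig η) b h} := by
  rw [crossEvent_eq]
  apply MeasurableSet.iUnion
  intro l
  apply MeasurableSet.iUnion
  intro _
  have : {η : Site → Bool | ∀ z ∈ l, η z = true} =
      ⋂ (z : Site) (_ : z ∈ l), {η : Site → Bool | η z = true} := by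
    ext η; simp
  rw [this]
  apply MeasurableSet.iInter
  intro z
  apply MeasurableSet.iInter
  intro _
  show MeasurableSet ((fun η : Site → Bool => η z) ⁻¹' {true})
  exact (measurable_pi_apply z) (measurableSet_singleton true)


lemma pc_mem_Icc (P : ℝ → Measure (Site → Bool))
    (hP : ∀ p ∈ Icc (0:ℝ) 1, IsBernoulli p (P p)) :
    pcOf adjT P ∈ Icc (0:ℝ) 1 := by
  have h0S : (0:ℝ) ∈ {p | p ∈ Icc (0:ℝ) 1 ∧ theta adjT (P p) = 0} := by
    refine ⟨⟨le_rfl, zero_le_one⟩, ?_⟩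
    have hB := hP 0 ⟨le_rfl, zero_le_one⟩
    have hsub : {η : Site → Bool | InInfiniteCluster adjT (toConfig η) 0} ⊆
        cylinder {(0 : Site)} (fun _ => true) := by
      intro η hη
      obtain ⟨y, hy⟩ := hη.nonempty
      obtain ⟨l, ⟨hne, hnd, hch⟩, hopen, hhead, hlast⟩ := hy
      intro z hz
      simp only [Finset.mem_singleton] at hz
      subst hz
      cases l with
      | nil => simp at hhead
      | cons a t =>
        have ha : a = (0 : Site) := by simpa using hhead
        have := hopen a List.mem_cons_self
        rw [ha] at this
        exact this
    have hcyl : (P 0) (cylinder {(0:Site)} (fun _ => true)) = 0 := by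
      rw [hB.2]
      simp
    unfold theta
    rw [measure_mono_null hsub hcyl]
    simp
  constructor
  · exact le_csSup ⟨1, fun p hp => hp.1.2⟩ h0S
  · exact csSup_le ⟨0, h0S⟩ (fun p hp => hp.1.2)


set_option maxHeartbeats 1600000

/-- for a monotonic nonessential enhancement of site percolation on
the triangular lattice and `s ∈ [0,1]`, if the crossing probabilities of independent
critical site percolation converge as `δ → 0` to a continuous function `F` of the
aspect ratio (Cardy's formula, by Smirnov's theorem), then the crossing probabilities
of the enhanced process converge to the same limit. -/
theorem crossing_probabilities_unchanged_triangular
    (P : ℝ → Measure (Site → Bool))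
    (hP : ∀ p ∈ Icc (0:ℝ) 1, IsBernoulli p (P p))
    (R₀ : ℝ) (φ : Config → Config) (hφ : IsEnhancement R₀ φ)
    (hmono : Monotonic φ) (hness : ¬ Essential adjT φ)
    (s : ℝ) (hs : s ∈ Icc (0:ℝ) 1)
    (F : ℝ → ℝ) (hF : ContinuousOn F (Ioi 0))
    (hconv : ∀ b h : ℝ, 0 < b → 0 < h →
      Tendsto (fun δ => crossProb adjT (embedT δ) (P (pcOf adjT P)) b h)
        (𝓝[>] 0) (𝓝 (F (b / h)))) :
    ∀ b h : ℝ, 0 < b → 0 < h →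
      Tendsto (fun δ => crossProbEnh adjT φ (embedT δ) (P (pcOf adjT P)) (P s) b h)
        (𝓝[>] 0) (𝓝 (F (b / h))) := by
  intro b h hb hh
  classical
  have hpcIcc := pc_mem_Icc P hP
  have hPB := hP _ hpcIcc
  have hPs := hP s hs
  haveI hμprob : IsProbabilityMeasure (P (pcOf adjT P)) := hPB.1
  haveI hνprob : IsProbabilityMeasure (P s) := hPs.1
  have hR0 : 0 ≤ R₀ := hφ.1
  rw [Metric.tendsto_nhds]
  intro ε hε
  have hbh : b / h ∈ Ioi (0:ℝ) := div_pos hb hh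
  have hcw := hF (b / h) hbh
  rw [Metric.continuousWithinAt_iff] at hcw
  obtain ⟨ρ, hρ0, hρ⟩ := hcw (ε / 4) (by positivity)
  set κ := min (h / 2) (ρ * h ^ 2 / (4 * (h + b))) with hκ
  have hκ0 : 0 < κ := lt_min (by positivity) (by positivity)
  have hκh : κ ≤ h / 2 := min_le_left _ _
  have hκ2 : κ ≤ ρ * h ^ 2 / (4 * (h + b)) := min_le_right _ _
  set b'' := b + κ with hb''def
  set h'' := h - κ with hh''def
  have hb''0 : 0 < b'' := by rw [hb''def]; linarith
  have hh''0 : 0 < h'' := by rw [hh''def]; linarith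
  have hratio : dist (b'' / h'') (b / h) < ρ := by
    rw [Real.dist_eq]
    have hpos : (0:ℝ) < h * (h - κ) := mul_pos hh (by linarith)
    have he : b'' / h'' - b / h = κ * (h + b) / (h * (h - κ)) := by
      rw [hb''def, hh''def]
      rw [div_sub_div _ _ (show h - κ ≠ 0 by linarith) hh.ne']
      ring
    have hval : κ * (h + b) / (h * (h - κ)) ≤ ρ / 2 := by
      rw [div_le_iff₀ hpos]
      have h1 : κ * (h + b) ≤ ρ * h ^ 2 / 4 := by
        have hhb : (0:ℝ) < h + b := by linarith
        calc κ * (h + b) ≤ (ρ * h ^ 2 / (4 * (h + b))) * (h + b) :=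
              mul_le_mul_of_nonneg_right hκ2 hhb.le
          _ = ρ * h ^ 2 / 4 := by field_simp
      have hhk : h * (h / 2) ≤ h * (h - κ) :=
        mul_le_mul_of_nonneg_left (by linarith) hh.le
      have h2 : ρ * h ^ 2 / 4 ≤ ρ / 2 * (h * (h - κ)) := by
        have h3 := mul_le_mul_of_nonneg_left hhk (by linarith : (0:ℝ) ≤ ρ / 2)
        have h4 : ρ / 2 * (h * (h / 2)) = ρ * h ^ 2 / 4 := by ring
        linarith
      linarith
    rw [he, abs_of_nonneg (div_nonneg (by positivity) hpos.le)]
    linarith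
  have hF'' : |F (b'' / h'') - F (b / h)| < ε / 4 := by
    have := hρ (show b'' / h'' ∈ Ioi (0:ℝ) from div_pos hb''0 hh''0) hratio
    rw [Real.dist_eq] at this
    exact this
  have hA := Metric.tendsto_nhds.mp (hconv b h hb hh) (ε / 4) (by positivity)
  have hB := Metric.tendsto_nhds.mp (hconv b'' h'' hb''0 hh''0) (ε / 4) (by positivity)
  set δ₀ := min (κ / (6 * R₀ + 6)) (min (h / 4) (κ / 2)) with hδ₀
  have hδ₀0 : 0 < δ₀ := by
    apply lt_min
    · exact div_pos hκ0 (by linarith)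
    · exact lt_min (by positivity) (by positivity)
  have hIoo : Ioo (0:ℝ) δ₀ ∈ 𝓝[>] (0:ℝ) := Ioo_mem_nhdsGT_of_mem ⟨le_rfl, hδ₀0⟩
  filter_upwards [hA, hB, hIoo] with δ h1 h2 h3
  obtain ⟨hδ0, hδlt⟩ := h3
  have hs3 : (0:ℝ) < Real.sqrt 3 := Real.sqrt_pos.mpr (by norm_num)
  have hs32 : Real.sqrt 3 < 2 := by
    nlinarith [Real.sq_sqrt (show (0:ℝ) ≤ 3 by norm_num)]
  have hδκ : δ < κ / (6 * R₀ + 6) := lt_of_lt_of_le hδlt (min_le_left _ _)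
  have hδh4 : δ < h / 4 :=
    lt_of_lt_of_le hδlt (le_trans (min_le_right _ _) (min_le_left _ _))
  have hδκ2 : δ < κ / 2 :=
    lt_of_lt_of_le hδlt (le_trans (min_le_right _ _) (min_le_right _ _))
  have hmb : b / 2 + 3 * δ * R₀ < b'' / 2 := by
    have h6 : (0:ℝ) < 6 * R₀ + 6 := by linarith
    have hδκ' : δ * (6 * R₀ + 6) < κ := (lt_div_iff₀ h6).mp hδκ
    have : 3 * δ * R₀ < κ / 2 := by nlinarith
    rw [hb''def]
    linarith
  have hmc : Real.sqrt 3 * δ < h'' := by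
    have : Real.sqrt 3 * δ < 2 * (h / 4) := by nlinarith
    rw [hh''def]
    linarith
  have hmh : h'' ≤ h - Real.sqrt 3 * δ := by
    have : Real.sqrt 3 * δ < κ := by nlinarith
    rw [hh''def]
    linarith
  set μ := P (pcOf adjT P) with hμdef
  set ν := P s with hνdef
  set A : Set (Site → Bool) :=
    {η | VertCrossing adjT (embedT δ) (toConfig η) b h} with hAdef
  set A2 : Set (Site → Bool) :=
    {η | VertCrossing adjT (embedT δ) (toConfig η) b'' h''} with hA2def
  set Eh : Set ((Site → Bool) × (Site → Bool)) :=
    {ηα | VertCrossing adjT (embedT δ) (enhanced φ (toConfig ηα.1) ηα.2) b h} with hEhdef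
  have hincl1 : A ×ˢ (Set.univ : Set (Site → Bool)) ⊆ Eh := by
    rintro ⟨η, a⟩ ⟨hη, -⟩
    exact vertCrossing_mono Set.subset_union_left hη
  have hincl2 : Eh ⊆ A2 ×ˢ (Set.univ : Set (Site → Bool)) := by
    rintro ⟨η, a⟩ hη
    exact ⟨master hφ hmono hness hδ0 hh hmb hmc hmh hη, trivial⟩
  have hprod1 : (μ.prod ν) (A ×ˢ Set.univ) = μ A := by
    rw [Measure.prod_prod, measure_univ, mul_one]
  have hprod2 : (μ.prod ν) (A2 ×ˢ Set.univ) = μ A2 := by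
    rw [Measure.prod_prod, measure_univ, mul_one]
  have hE1 : μ A ≤ (μ.prod ν) Eh := by
    rw [← hprod1]; exact measure_mono hincl1
  have hE2 : (μ.prod ν) Eh ≤ μ A2 := by
    rw [← hprod2]; exact measure_mono hincl2
  haveI : IsProbabilityMeasure (μ.prod ν) := by infer_instance
  have key1 : crossProb adjT (embedT δ) μ b h ≤ crossProbEnh adjT φ (embedT δ) μ ν b h :=
    ENNReal.toReal_mono (measure_ne_top _ _) hE1
  have key2 : crossProbEnh adjT φ (embedT δ) μ ν b h ≤ crossProb adjT (embedT δ) μ b'' h'' :=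
    ENNReal.toReal_mono (measure_ne_top _ _) hE2
  rw [Real.dist_eq] at h1 h2 ⊢
  have hq1 := abs_lt.mp h1
  have hq2 := abs_lt.mp h2
  have hq3 := abs_lt.mp hF''
  rw [abs_lt]
  constructor
  · have := hq1.1
    linarith
  · have := hq2.2
    linarith


end PercEnh
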